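/- If Y_i and Y_{ℓ_1(i)},...,Y_{ℓ_J(i)} are independent random variables all with mean μ_w(X_i) and variance σ_w²(X_i) (i.e., all J matches have the same covariate value as unit i), then σ̂_w²(X_i) := (J/(J+1)) · (Y_i − (1/J) Σ_{j=1}^{J} Y_{ℓ_j(i)})² is an unbiased estimator of σ_w²(X_i): E[σ̂_w²(X_i)] = σ_w²(X_i). -/

import Mathlib

open MeasureTheory ProbabilityTheory Finset

/-- If `Y 0` (unit `i`'s outcome) and its `J` within-group matches
`Y 1, …, Y J` are independent random variables with common mean `μw` and common
variance `σ2` (all matches share unit `i`'s covariate value), then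
`σ̂² := (J/(J+1)) (Y 0 − (1/J) ∑_{j=1}^J Y j)²` is unbiased: `E[σ̂²] = σ2`. -/
theorem matched_variance_estimator_unbiased {Ω : Type*} [MeasurableSpace Ω]
    (μ : Measure Ω) [IsProbabilityMeasure μ] (J : ℕ) (hJ : 0 < J)
    (Y : Fin (J + 1) → Ω → ℝ)
    (hmeas : ∀ j, Measurable (Y j)) (hL2 : ∀ j, MemLp (Y j) 2 μ)
    (hindep : iIndepFun Y μ)
    (μw σ2 : ℝ)
    (hmean : ∀ j, ∫ ω, Y j ω ∂μ = μw)
    (hvar : ∀ j, variance (Y j) μ = σ2) :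
    ∫ ω, ((J : ℝ) / (J + 1))
        * (Y 0 ω - (1 / (J : ℝ)) * ∑ j : Fin J, Y j.succ ω) ^ 2 ∂μ
      = σ2 := by
  have hJ0 : (J : ℝ) ≠ 0 := Nat.cast_ne_zero.mpr hJ.ne'
  set c : Fin (J + 1) → ℝ := fun j => if j = 0 then 1 else -(1 / (J : ℝ)) with hc
  set Z : Ω → ℝ := fun ω => ∑ j, c j * Y j ω with hZ
  have hZfun : Z = ∑ j : Fin (J + 1), fun ω => c j * Y j ω := by
    ext ω; simp [hZ, Finset.sum_apply]
  have hZeq : ∀ ω, Y 0 ω - (1 / (J : ℝ)) * ∑ j : Fin J, Y j.succ ω = Z ω := by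
    intro ω
    simp only [hZ, Fin.sum_univ_succ, hc, if_pos rfl, Fin.succ_ne_zero, if_false,
      one_mul, neg_mul, Finset.mul_sum, Finset.sum_neg_distrib]
    ring_nf
    simp
  have hX2 : ∀ j : Fin (J + 1), MemLp (fun ω => c j * Y j ω) 2 μ :=
    fun j => (hL2 j).const_mul (c j)
  have hpair : ∀ i j : Fin (J + 1), i ≠ j →
      IndepFun (fun ω => c i * Y i ω) (fun ω => c j * Y j ω) μ := by
    intro i j hij
    exact (hindep.indepFun hij).comp (measurable_const_mul (c i))
      (measurable_const_mul (c j))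
  have hZL2 : MemLp Z 2 μ := by
    rw [hZfun]; exact memLp_finset_sum' _ (fun j _ => hX2 j)
  have hvarZ : variance Z μ = ∑ j : Fin (J + 1), (c j) ^ 2 * σ2 := by
    have hsum : variance (∑ j : Fin (J + 1), fun ω => c j * Y j ω) μ
        = ∑ j : Fin (J + 1), variance (fun ω => c j * Y j ω) μ :=
      IndepFun.variance_sum (fun j _ => hX2 j)
        (fun i _ j _ hij => hpair i j hij)
    have h1 : variance Z μ = ∑ j : Fin (J + 1), variance (fun ω => c j * Y j ω) μ := by
      rw [hZfun, hsum]
    rw [h1]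
    refine Finset.sum_congr rfl fun j _ => ?_
    rw [variance_const_mul, hvar j]
  have hintZ : ∫ ω, Z ω ∂μ = 0 := by
    have : ∫ ω, Z ω ∂μ = ∑ j : Fin (J + 1), ∫ ω, c j * Y j ω ∂μ := by
      rw [hZ]
      exact integral_finset_sum _ (fun j _ => ((hL2 j).integrable one_le_two).const_mul _)
    rw [this]
    have : ∀ j, ∫ ω, c j * Y j ω ∂μ = c j * μw := by
      intro j; rw [integral_const_mul, hmean j]
    simp only [this, ← Finset.sum_mul]
    have : ∑ j : Fin (J + 1), c j = 0 := by
      simp [hc, Fin.sum_univ_succ, Fin.succ_ne_zero, mul_comm, hJ0]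
    rw [this, zero_mul]
  have hZ2 : ∫ ω, Z ω ^ 2 ∂μ = variance Z μ := by
    have := variance_eq_sub hZL2
    simp only [Pi.pow_apply] at this
    rw [this, hintZ]; ring
  have hcsum : ∑ j : Fin (J + 1), (c j) ^ 2 * σ2 = ((J : ℝ) + 1) / J * σ2 := by
    simp only [hc, Fin.sum_univ_succ, if_pos rfl, Fin.succ_ne_zero, if_false, if_true]
    rw [Finset.sum_const, Finset.card_univ, Fintype.card_fin]
    field_simp
    rw [nsmul_eq_mul]
    field_simp
  calc ∫ ω, ((J : ℝ) / (J + 1)) * (Y 0 ω - (1 / (J : ℝ)) * ∑ j : Fin J, Y j.succ ω) ^ 2 ∂μ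
      = ((J : ℝ) / (J + 1)) * ∫ ω, Z ω ^ 2 ∂μ := by
        simp_rw [hZeq]; rw [integral_const_mul]
    _ = σ2 := by
        rw [hZ2, hvarZ, hcsum]
        have hJ1 : (J : ℝ) + 1 ≠ 0 := by positivity
        field_simp
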